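/- Let K be a field and I ⊆ K[t_1,...,t_l] any ideal. Then rad(I) = rad(I : (t_1⋯t_l)^∞) ∩ rad(I, t_1) ∩ ... ∩ rad(I, t_l), where (I, t_i) denotes the ideal generated by I and t_i. -/
import Mathlib


open MvPolynomial

/-- The saturation `J : f^∞ = {g | f^k * g ∈ J for some k}`. -/
def satPow {R : Type*} [CommRing R] (J : Ideal R) (f : R) : Ideal R where
  carrier := {g | ∃ k : ℕ, f ^ k * g ∈ J}
  zero_mem' := ⟨0, by simp⟩
  add_mem' := by
    rintro a b ⟨k, hk⟩ ⟨j, hj⟩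
    refine ⟨k + j, ?_⟩
    have : f ^ (k + j) * (a + b) = f ^ j * (f ^ k * a) + f ^ k * (f ^ j * b) := by ring
    rw [this]
    exact add_mem (J.mul_mem_left _ hk) (J.mul_mem_left _ hj)
  smul_mem' := by
    rintro c a ⟨k, hk⟩
    refine ⟨k, ?_⟩
    have : f ^ k * (c • a) = c * (f ^ k * a) := by rw [smul_eq_mul]; ring
    rw [this]
    exact J.mul_mem_left _ hk

theorem stmt17 (K : Type*) [Field K] {l : ℕ} (I : Ideal (MvPolynomial (Fin l) K)) :
    I.radical =
      (satPow I (∏ i : Fin l, X i)).radical ⊓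
        ⨅ i : Fin l, (I ⊔ Ideal.span {X i}).radical := by
  apply le_antisymm
  · refine le_inf (Ideal.radical_mono fun g hg => ⟨0, by simpa using hg⟩) ?_
    exact le_iInf fun i => Ideal.radical_mono le_sup_left
  · intro g hg
    obtain ⟨h1, h2⟩ := Ideal.mem_inf.mp hg
    rw [Ideal.radical_eq_sInf]
    refine Ideal.mem_sInf.mpr ?_
    rintro P ⟨hIP, hP⟩
    obtain ⟨n, k, hk⟩ := h1
    have hmem : (∏ i : Fin l, X (R := K) i) ^ k * g ^ n ∈ P := hIP hk
    rcases hP.mul_mem_iff_mem_or_mem.mp hmem with h | h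
    · have hprod : (∏ i : Fin l, X (R := K) i) ∈ P := hP.mem_of_pow_mem _ h
      obtain ⟨i, -, hi⟩ := (Ideal.IsPrime.prod_mem_iff (hp := hP)).mp hprod
      have h2i := Ideal.mem_iInf.mp h2 i
      have hle : I ⊔ Ideal.span {X (R := K) i} ≤ P :=
        sup_le hIP ((Ideal.span_singleton_le_iff_mem _).mpr hi)
      have : g ∈ P.radical := Ideal.radical_mono hle h2i
      rwa [hP.radical] at this
    · exact hP.mem_of_pow_mem _ h
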